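/- Every nonzero palindromic Laurent polynomial in ℝ[t,t⁻¹] whose value at t=1 and t=−1 is nonzero factors as a product of a nonzero real constant, a power ±tⁿ, and elementary palindromic polynomials B_ξ(t)^{n_ξ} for ξ ranging over {ξ ∈ ℂ∖{0} : Im ξ ≥ 0, |ξ| ≤ 1, ξ ≠ ±1}, and this factorization is unique up to ordering. -/

import Mathlib

open LaurentPolynomial

noncomputable def lEval (p : LaurentPolynomial ℝ) (z : ℂ) : ℂ :=
  Finsupp.sum (AddMonoidAlgebra.coeff p) fun n a => (a : ℂ) * z ^ n

/-- Extension of coefficients `ℝ → ℂ` for Laurent polynomials. -/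
noncomputable def lmap (p : LaurentPolynomial ℝ) : LaurentPolynomial ℂ :=
  AddMonoidAlgebra.ofCoeff (Finsupp.mapRange (algebraMap ℝ ℂ) (map_zero _) (AddMonoidAlgebra.coeff p))

/-- The elementary palindromic polynomial `B_ξ`. -/
noncomputable def Bxi (ξ : ℂ) : LaurentPolynomial ℂ :=
  if ‖ξ‖ = 1 then
    (T 1 - C ξ) * (T 1 - C (starRingEnd ℂ ξ))
  else if ξ.im = 0 then
    (T 1 - C ξ) * (1 - C ξ⁻¹ * T (-1))
  else
    (T 1 - C ξ) * (T 1 - C (starRingEnd ℂ ξ)) *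
      (1 - T (-1) * C (starRingEnd ℂ ξ)⁻¹) * (1 - T (-1) * C ξ⁻¹)

def Dset (ξ : ℂ) : Prop :=
  ‖ξ‖ ≤ 1 ∧ ξ ≠ 0 ∧ 0 ≤ ξ.im ∧ ξ ≠ 1 ∧ ξ ≠ -1

noncomputable def orb (ξ : ℂ) : Multiset ℂ :=
  if ‖ξ‖ = 1 then {ξ, starRingEnd ℂ ξ}
  else if ξ.im = 0 then {ξ, ξ⁻¹}
  else {ξ, starRingEnd ℂ ξ, (starRingEnd ℂ ξ)⁻¹, ξ⁻¹}

noncomputable def sdeg (ξ : ℂ) : ℕ :=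
  if ‖ξ‖ = 1 then 0 else if ξ.im = 0 then 1 else 2

noncomputable def orbPoly (ξ : ℂ) : Polynomial ℂ :=
  ((orb ξ).map (fun z => Polynomial.X - Polynomial.C z)).prod

lemma toLaurent_X_sub_C (z : ℂ) :
    Polynomial.toLaurent (Polynomial.X - Polynomial.C z)
      = T 1 - LaurentPolynomial.C z := by
  simp [map_sub]

lemma Bxi_eq (ξ : ℂ) :
    Bxi ξ = Polynomial.toLaurent (orbPoly ξ) * T (-(sdeg ξ : ℤ)) := by
  unfold Bxi
  rw [orbPoly, orb, sdeg]
  split_ifs with h1 h2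
  · simp [map_mul, toLaurent_X_sub_C]
  · simp only [Multiset.insert_eq_cons, Multiset.map_cons, Multiset.map_singleton,
      Multiset.prod_cons, Multiset.prod_singleton, map_mul, toLaurent_X_sub_C]
    rw [mul_assoc]
    congr 1
    rw [sub_mul, ← T_add]
    norm_num
  · simp only [Multiset.insert_eq_cons, Multiset.map_cons, Multiset.map_singleton,
      Multiset.prod_cons, Multiset.prod_singleton, map_mul, toLaurent_X_sub_C]
    have e : ∀ z : ℂ, (T 1 - LaurentPolynomial.C z) * T (-1)
        = 1 - T (-1) * LaurentPolynomial.C z := by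
      intro z
      rw [sub_mul, ← T_add]
      norm_num
    push_cast
    rw [show (-2 : ℤ) = -1 + -1 by norm_num, T_add, ← e, ← e]
    ring

lemma toLaurent_T_eq_aux {R : Type*} [CommSemiring R] {f g : Polynomial R} {a b : ℤ}
    (hf : f.coeff 0 ≠ 0) (hab : a ≤ b)
    (h : Polynomial.toLaurent f * T a = Polynomial.toLaurent g * T b) : f = g ∧ a = b := by
  have h2 : Polynomial.toLaurent f = Polynomial.toLaurent g * T (b - a) := by
    have := congrArg (· * T (-a)) h
    simpa [mul_T_assoc, ← T_sub, sub_eq_add_neg] using this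
  have hk : (b - a) = ((b - a).toNat : ℤ) := (Int.toNat_of_nonneg (by omega)).symm
  rw [hk, ← Polynomial.toLaurent_X_pow, ← map_mul, Polynomial.toLaurent_inj] at h2
  have hz : (b - a).toNat = 0 := by
    by_contra hne
    have : f.coeff 0 = 0 := by
      rw [h2, Polynomial.coeff_mul_X_pow']
      simp [hne]
    exact hf this
  constructor
  · rw [h2, hz, pow_zero, mul_one]
  · omega

lemma toLaurent_T_eq {R : Type*} [CommSemiring R] {f g : Polynomial R} {a b : ℤ}
    (hf : f.coeff 0 ≠ 0) (hg : g.coeff 0 ≠ 0)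
    (h : Polynomial.toLaurent f * T a = Polynomial.toLaurent g * T b) : f = g ∧ a = b := by
  rcases le_total a b with hab | hab
  · exact toLaurent_T_eq_aux hf hab h
  · obtain ⟨h1, h2⟩ := toLaurent_T_eq_aux hg hab h.symm
    exact ⟨h1.symm, h2.symm⟩

lemma lmap_add (p q : LaurentPolynomial ℝ) : lmap (p + q) = lmap p + lmap q :=
  by unfold lmap; rw [AddMonoidAlgebra.coeff_add, Finsupp.mapRange_add (map_add (algebraMap ℝ ℂ)), AddMonoidAlgebra.ofCoeff_add]

lemma lmap_single (n : ℤ) (a : ℝ) :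
    lmap (AddMonoidAlgebra.single n a) = AddMonoidAlgebra.single n (a : ℂ) := by
  unfold lmap; rw [AddMonoidAlgebra.coeff_single, Finsupp.mapRange_single]; rfl

lemma lmap_C_mul_T (n : ℤ) (a : ℝ) :
    lmap (LaurentPolynomial.C a * T n) = LaurentPolynomial.C (a : ℂ) * T n := by
  rw [← single_eq_C_mul_T, ← single_eq_C_mul_T (a : ℂ), lmap_single]

lemma lmap_toLaurent_T (f : Polynomial ℝ) (m : ℤ) :
    lmap (Polynomial.toLaurent f * T m)
      = Polynomial.toLaurent (f.map (algebraMap ℝ ℂ)) * T m := by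
  induction f using Polynomial.induction_on' with
  | add p q hp hq =>
    rw [_root_.map_add Polynomial.toLaurent, add_mul, lmap_add, hp, hq, Polynomial.map_add,
      _root_.map_add Polynomial.toLaurent, add_mul]
  | monomial n a =>
    rw [Polynomial.toLaurent_C_mul_T, mul_T_assoc, lmap_C_mul_T, Polynomial.map_monomial,
      Polynomial.toLaurent_C_mul_T, mul_T_assoc]
    rfl

lemma lEval_add (p q : LaurentPolynomial ℝ) (z : ℂ) :
    lEval (p + q) z = lEval p z + lEval q z := by
  unfold lEval
  rw [AddMonoidAlgebra.coeff_add, Finsupp.sum_add_index]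
  · intro n _; simp
  · intro n _ a b; push_cast; ring

lemma lEval_toLaurent_T (f : Polynomial ℝ) (m : ℤ) {z : ℂ} (hz : z ≠ 0) :
    lEval (Polynomial.toLaurent f * T m) z
      = (f.map (algebraMap ℝ ℂ)).eval z * z ^ m := by
  induction f using Polynomial.induction_on' with
  | add p q hp hq =>
    rw [_root_.map_add Polynomial.toLaurent, add_mul, lEval_add, hp, hq, Polynomial.map_add,
      Polynomial.eval_add, add_mul]
  | monomial n a =>
    rw [Polynomial.toLaurent_C_mul_T, mul_T_assoc, ← single_eq_C_mul_T]
    unfold lEval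
    rw [AddMonoidAlgebra.coeff_single, Finsupp.sum_single_index (by simp)]
    simp only [Polynomial.map_monomial, Polynomial.eval_monomial]
    rw [zpow_add₀ hz, zpow_natCast]
    rw [Complex.coe_algebraMap]
    push_cast
    ring
open Complex in
lemma real_of_im_eq_zero {z : ℂ} (h : z.im = 0) : z = (z.re : ℂ) := by
  apply Complex.ext <;> simp [h]

open Complex in
lemma D_abs_one_im_pos {ξ : ℂ} (hξ : Dset ξ) (h1 : ‖ξ‖ = 1) : 0 < ξ.im := by
  obtain ⟨habs, h0, him, hone, hmone⟩ := hξ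
  rcases him.lt_or_eq with h | h
  · exact h
  · exfalso
    have hre := real_of_im_eq_zero h.symm
    rw [hre] at h1
    rw [Complex.norm_real, Real.norm_eq_abs] at h1
    rcases abs_eq (by norm_num : (0:ℝ) ≤ 1) |>.mp h1 with h' | h'
    · exact hone (by rw [hre, h']; norm_num)
    · exact hmone (by rw [hre, h']; norm_num)

lemma D_abs_lt_one {ξ : ℂ} (hξ : Dset ξ) (h1 : ‖ξ‖ ≠ 1) : ‖ξ‖ < 1 :=
  lt_of_le_of_ne hξ.1 h1

lemma D_im_pos_of_ne {ξ : ℂ} (hξ : Dset ξ) (h2 : ξ.im ≠ 0) : 0 < ξ.im :=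
  lt_of_le_of_ne hξ.2.2.1 (Ne.symm h2)

lemma inv_eq_conj_of_abs_one {ξ : ℂ} (h1 : ‖ξ‖ = 1) : ξ⁻¹ = starRingEnd ℂ ξ := by
  have : ξ * starRingEnd ℂ ξ = 1 := by
    rw [Complex.mul_conj, ← Complex.sq_norm, h1]
    norm_num
  exact inv_eq_of_mul_eq_one_right this

lemma abs_inv_gt {ξ : ℂ} (h0 : ξ ≠ 0) (h : ‖ξ‖ < 1) : 1 < ‖ξ⁻¹‖ := by
  rw [norm_inv]
  exact (one_lt_inv₀ (norm_pos_iff.mpr h0)).mpr h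

lemma im_inv_conj {ξ : ℂ} (h0 : ξ ≠ 0) : ((starRingEnd ℂ ξ)⁻¹).im = ξ.im / Complex.normSq ξ := by
  rw [Complex.inv_im]
  simp [Complex.normSq_conj]

lemma im_inv_neg (ξ : ℂ) : (ξ⁻¹).im = -ξ.im / Complex.normSq ξ := Complex.inv_im ξ

lemma mem_orb_self (ξ : ℂ) : ξ ∈ orb ξ := by
  rw [orb]; split_ifs <;> simp

lemma orb_cases {ξ z : ℂ} (hz : z ∈ orb ξ) :
    z = ξ ∨ z = starRingEnd ℂ ξ ∨ z = ξ⁻¹ ∨ z = (starRingEnd ℂ ξ)⁻¹ := by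
  rw [orb] at hz
  split_ifs at hz <;> simp at hz <;> tauto

lemma orb_ne_zero {ξ z : ℂ} (h0 : ξ ≠ 0) (hz : z ∈ orb ξ) : z ≠ 0 := by
  rcases orb_cases hz with h | h | h | h <;> subst h <;> simp [h0]

lemma orb_nodup {ξ : ℂ} (hξ : Dset ξ) : (orb ξ).Nodup := by
  obtain ⟨habs, h0, him, hone, hmone⟩ := hξ
  rw [orb]
  split_ifs with h1 h2
  · have hip := D_abs_one_im_pos ⟨habs, h0, him, hone, hmone⟩ h1
    have : starRingEnd ℂ ξ ≠ ξ := by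
      intro h; rw [Complex.conj_eq_iff_im] at h; exact hip.ne' h
    simp [this.symm]
  · -- real case: ξ ≠ ξ⁻¹ since abs ξ < 1 < abs ξ⁻¹
    have hlt := D_abs_lt_one ⟨habs, h0, him, hone, hmone⟩ h1
    have hgt := abs_inv_gt h0 hlt
    have : ξ ≠ ξ⁻¹ := by intro h; rw [← h] at hgt; linarith
    simp [this]
  · have hip := D_im_pos_of_ne ⟨habs, h0, him, hone, hmone⟩ h2
    have hlt := D_abs_lt_one ⟨habs, h0, him, hone, hmone⟩ h1
    have hnsq : 0 < Complex.normSq ξ := Complex.normSq_pos.mpr h0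
    have habs2 : ‖starRingEnd ℂ ξ‖ = ‖ξ‖ := Complex.norm_conj ξ
    have hgt3 : 1 < ‖(starRingEnd ℂ ξ)⁻¹‖ := by
      rw [norm_inv, habs2]; exact (one_lt_inv₀ (norm_pos_iff.mpr h0)).mpr hlt
    have hgt4 : 1 < ‖ξ⁻¹‖ := abs_inv_gt h0 hlt
    have i2 : (starRingEnd ℂ ξ).im < 0 := by simp [hip]
    have i3 : 0 < ((starRingEnd ℂ ξ)⁻¹).im := by rw [im_inv_conj h0]; positivity
    have i4 : (ξ⁻¹).im < 0 := by rw [im_inv_neg ξ]; exact div_neg_of_neg_of_pos (by linarith) hnsq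
    refine Multiset.nodup_cons.mpr ⟨?_, Multiset.nodup_cons.mpr ⟨?_, Multiset.nodup_cons.mpr ⟨?_, Multiset.nodup_singleton _⟩⟩⟩
    · simp only [Multiset.insert_eq_cons, Multiset.mem_cons, Multiset.mem_singleton]
      push_neg
      refine ⟨fun h => ?_, fun h => ?_, fun h => ?_⟩
      · rw [← h] at i2; linarith
      · rw [← h] at hgt3; linarith
      · rw [← h] at hgt4; linarith
    · simp only [Multiset.insert_eq_cons, Multiset.mem_cons, Multiset.mem_singleton]
      push_neg
      refine ⟨fun h => ?_, fun h => ?_⟩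
      · rw [← h, habs2] at hgt3; linarith
      · rw [← h, habs2] at hgt4; linarith
    · simp only [Multiset.mem_singleton]
      intro h
      rw [← h] at i4; linarith

lemma orb_D_eq {ξ z : ℂ} (hξ : Dset ξ) (hz : z ∈ orb ξ) (hzD : Dset z) : z = ξ := by
  obtain ⟨habs, h0, him, hone, hmone⟩ := hξ
  obtain ⟨habs', h0', him', hone', hmone'⟩ := hzD
  rw [orb] at hz
  split_ifs at hz with h1 h2
  · have hip := D_abs_one_im_pos ⟨habs, h0, him, hone, hmone⟩ h1
    simp only [Multiset.insert_eq_cons, Multiset.mem_cons, Multiset.mem_singleton] at hz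
    rcases hz with h | h
    · exact h
    · exfalso; rw [h] at him'; simp [hip.le] at him'; linarith [hip, him']
  · have hlt := D_abs_lt_one ⟨habs, h0, him, hone, hmone⟩ h1
    have hgt := abs_inv_gt h0 hlt
    simp only [Multiset.insert_eq_cons, Multiset.mem_cons, Multiset.mem_singleton] at hz
    rcases hz with h | h
    · exact h
    · exfalso; rw [h] at habs'; linarith
  · have hip := D_im_pos_of_ne ⟨habs, h0, him, hone, hmone⟩ h2
    have hlt := D_abs_lt_one ⟨habs, h0, him, hone, hmone⟩ h1
    have hnsq : 0 < Complex.normSq ξ := Complex.normSq_pos.mpr h0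
    simp only [Multiset.insert_eq_cons, Multiset.mem_cons, Multiset.mem_singleton] at hz
    rcases hz with h | h | h | h
    · exact h
    · exfalso; rw [h] at him'; simp at him'; linarith
    · exfalso
      rw [h, norm_inv, Complex.norm_conj] at habs'
      have : 1 < (‖ξ‖)⁻¹ := (one_lt_inv₀ (norm_pos_iff.mpr h0)).mpr hlt
      linarith
    · exfalso
      rw [h, im_inv_neg ξ] at him'
      have : -ξ.im / Complex.normSq ξ < 0 := div_neg_of_neg_of_pos (by linarith) hnsq
      linarith

lemma orb_map_conj {ξ : ℂ} (hξ : Dset ξ) : (orb ξ).map (starRingEnd ℂ) = orb ξ := by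
  obtain ⟨habs, h0, him, hone, hmone⟩ := hξ
  rw [orb]
  split_ifs with h1 h2
  · simp only [Multiset.insert_eq_cons, Multiset.map_cons, Multiset.map_singleton,
      Complex.conj_conj]
    simp only [Multiset.insert_eq_cons, ← Multiset.singleton_add]
    abel
  · have : starRingEnd ℂ ξ = ξ := Complex.conj_eq_iff_im.mpr h2
    simp [map_inv₀, this]
  · simp only [Multiset.insert_eq_cons, Multiset.map_cons, Multiset.map_singleton,
      Complex.conj_conj, map_inv₀]
    simp only [Multiset.insert_eq_cons, ← Multiset.singleton_add]
    abel

lemma orb_map_inv {ξ : ℂ} (hξ : Dset ξ) : (orb ξ).map (·⁻¹) = orb ξ := by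
  obtain ⟨habs, h0, him, hone, hmone⟩ := hξ
  rw [orb]
  split_ifs with h1 h2
  · have hi : ξ⁻¹ = starRingEnd ℂ ξ := inv_eq_conj_of_abs_one h1
    have hi2 : (starRingEnd ℂ ξ)⁻¹ = ξ := by
      rw [← map_inv₀, hi, Complex.conj_conj]
    simp only [Multiset.insert_eq_cons, Multiset.map_cons, Multiset.map_singleton, hi, hi2]
    simp only [Multiset.insert_eq_cons, ← Multiset.singleton_add]
    abel
  · simp only [Multiset.insert_eq_cons, Multiset.map_cons, Multiset.map_singleton, inv_inv]
    simp only [Multiset.insert_eq_cons, ← Multiset.singleton_add]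
    abel
  · simp only [Multiset.insert_eq_cons, Multiset.map_cons, Multiset.map_singleton, inv_inv]
    simp only [Multiset.insert_eq_cons, ← Multiset.singleton_add]
    abel
lemma orbPoly_monic (ξ : ℂ) : (orbPoly ξ).Monic := by
  apply Polynomial.monic_multiset_prod_of_monic
  intro z _
  exact Polynomial.monic_X_sub_C z

lemma orbPoly_roots (ξ : ℂ) : (orbPoly ξ).roots = orb ξ :=
  Polynomial.roots_multiset_prod_X_sub_C (orb ξ)

lemma orbPoly_eval_ne_zero {ξ z : ℂ} (h0 : ξ ≠ 0) (hz : z ∉ orb ξ) :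
    (orbPoly ξ).eval z ≠ 0 := by
  rw [orbPoly, Polynomial.eval_multiset_prod]
  intro h
  rw [Multiset.prod_eq_zero_iff] at h
  rw [Multiset.mem_map] at h
  obtain ⟨q, hq, hq2⟩ := h
  rw [Multiset.mem_map] at hq
  obtain ⟨w, hw, rfl⟩ := hq
  simp only [Polynomial.eval_sub, Polynomial.eval_X, Polynomial.eval_C, sub_eq_zero] at hq2
  exact hz (hq2 ▸ hw)

lemma orbPoly_coeff_zero_ne {ξ : ℂ} (h0 : ξ ≠ 0) : (orbPoly ξ).coeff 0 ≠ 0 := by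
  rw [Polynomial.coeff_zero_eq_eval_zero]
  exact orbPoly_eval_ne_zero h0 (fun h => (orb_ne_zero h0 h) rfl)

noncomputable def prodOrb (f : ℂ →₀ ℕ) : Multiset ℂ := f.sum fun ξ k => k • orb ξ

lemma prodOrb_add_single (f : ℂ →₀ ℕ) (a : ℂ) (n : ℕ) :
    prodOrb (Finsupp.single a n + f) = n • orb a + prodOrb f := by
  unfold prodOrb
  rw [Finsupp.sum_add_index' (h := fun ξ k => k • orb ξ) (fun ξ => zero_nsmul _)
      (fun ξ k1 k2 => add_nsmul _ k1 k2),
    Finsupp.sum_single_index (h := fun ξ k => k • orb ξ) (zero_nsmul _)]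

lemma prod_X_sub_C_prodOrb (f : ℂ →₀ ℕ) :
    ((prodOrb f).map (fun z => Polynomial.X - Polynomial.C z)).prod
      = f.prod fun ξ k => orbPoly ξ ^ k := by
  induction f using Finsupp.induction with
  | zero => simp [prodOrb]
  | single_add a n g hag hn ih =>
    rw [prodOrb_add_single, Multiset.map_add, Multiset.prod_add, Multiset.map_nsmul,
      Multiset.prod_nsmul, ih, Finsupp.prod_add_index' (h := fun ξ k => orbPoly ξ ^ k)
        (fun ξ => pow_zero _) (fun ξ k1 k2 => pow_add _ k1 k2),
      Finsupp.prod_single_index (h := fun ξ k => orbPoly ξ ^ k) (pow_zero _)]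
    rfl

lemma count_orb_eq {ξ ξ' : ℂ} (hξ : Dset ξ) (hξ' : Dset ξ') :
    (orb ξ').count ξ = if ξ = ξ' then 1 else 0 := by
  split_ifs with h
  · subst h
    exact Multiset.count_eq_one_of_mem (orb_nodup hξ) (mem_orb_self ξ)
  · rw [Multiset.count_eq_zero]
    intro hmem
    exact h (orb_D_eq hξ' hmem hξ)

lemma count_prodOrb {f : ℂ →₀ ℕ} (hf : ∀ ξ ∈ f.support, Dset ξ) {ξ : ℂ} (hξ : Dset ξ) :
    (prodOrb f).count ξ = f ξ := by
  induction f using Finsupp.induction with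
  | zero => simp [prodOrb]
  | single_add a n g hag hn ih =>
    have haD : Dset a := hf a (by simp [Finsupp.support_add_eq, hn, Finsupp.mem_support_iff])
    have hgD : ∀ ξ' ∈ g.support, Dset ξ' := by
      intro ξ' hξ'
      apply hf
      rw [Finsupp.mem_support_iff] at hξ' ⊢
      rw [Finsupp.add_apply, Finsupp.single_apply]
      have hne : ξ' ≠ a := fun h => hag (Finsupp.mem_support_iff.mpr (h ▸ hξ'))
      simp [Ne.symm hne, hξ']
    rw [prodOrb_add_single, Multiset.count_add, Multiset.count_nsmul, count_orb_eq hξ haD,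
      ih hgD, Finsupp.add_apply, Finsupp.single_apply]
    by_cases h : ξ = a
    · simp [h]
    · simp [h, Ne.symm h]

lemma map_sub_invol {g : ℂ → ℂ} (hg : Function.Involutive g) {s t : Multiset ℂ}
    (hs : s.map g = s) (ht : t.map g = t) : (s - t).map g = s - t := by
  have hinj := hg.injective
  ext z
  have key : ∀ (u : Multiset ℂ), u.map g = u → ∀ w, u.count (g w) = u.count w := by
    intro u hu w
    conv_lhs => rw [← hu]
    rw [Multiset.count_map_eq_count' g _ hinj]
  have : ∀ w, ((s - t).map g).count (g w) = (s - t).count (g w) := by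
    intro w
    rw [Multiset.count_map_eq_count' g _ hinj, Multiset.count_sub, Multiset.count_sub,
      key s hs, key t ht]
  have := this (g z)
  rwa [hg z] at this

lemma decomp : ∀ (N : ℕ) (s : Multiset ℂ), Multiset.card s ≤ N →
    s.map (starRingEnd ℂ) = s → s.map (·⁻¹) = s →
    (0:ℂ) ∉ s → (1:ℂ) ∉ s → (-1:ℂ) ∉ s →
    ∃ f : ℂ →₀ ℕ, (∀ ξ ∈ f.support, Dset ξ) ∧ prodOrb f = s := by
  intro N
  induction N with
  | zero =>
    intro s hcard _ _ _ _ _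
    have : s = 0 := by
      rw [← Multiset.card_eq_zero]
      omega
    exact ⟨0, by simp, by simp [prodOrb, this]⟩
  | succ N ih =>
    intro s hcard hconj hinv h0 h1 hm1
    rcases Multiset.empty_or_exists_mem s with hs | ⟨a, ha⟩
    · exact ⟨0, by simp, by simp [prodOrb, hs]⟩
    have hc : ∀ z ∈ s, starRingEnd ℂ z ∈ s := by
      intro z hz; rw [← hconj]; exact Multiset.mem_map_of_mem _ hz
    have hi : ∀ z ∈ s, z⁻¹ ∈ s := by
      intro z hz; rw [← hinv]; exact Multiset.mem_map_of_mem _ hz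
    have ha0 : a ≠ 0 := fun h => h0 (h ▸ ha)
    have ha1 : a ≠ 1 := fun h => h1 (h ▸ ha)
    have ham1 : a ≠ -1 := fun h => hm1 (h ▸ ha)
    -- find a normalized element ξ ∈ D ∩ s
    have hnorm : ∃ ξ, Dset ξ ∧ ξ ∈ s := by
      by_cases him : a.im = 0
      · by_cases hle : ‖a‖ ≤ 1
        · exact ⟨a, ⟨hle, ha0, him.symm.le, ha1, ham1⟩, ha⟩
        · push_neg at hle
          refine ⟨a⁻¹, ⟨?_, inv_ne_zero ha0, ?_, ?_, ?_⟩, hi a ha⟩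
          · rw [norm_inv]
            exact le_of_lt ((inv_lt_one₀ (by linarith)).mpr hle)
          · rw [im_inv_neg a, him]; simp
          · intro h; exact ha1 (by rwa [inv_eq_one] at h)
          · intro h
            apply ham1
            have := congrArg (·⁻¹) h
            simpa [inv_neg] using this
      · have hb : ∃ b, b ∈ s ∧ 0 < b.im ∧ b ≠ 0 := by
          rcases lt_or_gt_of_ne him with hlt | hgt
          · refine ⟨starRingEnd ℂ a, hc a ha, by simpa using hlt, by simpa using ha0⟩
          · exact ⟨a, ha, hgt, ha0⟩
        obtain ⟨b, hbs, hbim, hb0⟩ := hb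
        have hbne1 : b ≠ 1 := fun h => by rw [h] at hbim; simp at hbim
        have hbnem1 : b ≠ -1 := fun h => by rw [h] at hbim; simp at hbim
        by_cases hble : ‖b‖ ≤ 1
        · exact ⟨b, ⟨hble, hb0, hbim.le, hbne1, hbnem1⟩, hbs⟩
        · push_neg at hble
          have hnsq : 0 < Complex.normSq b := Complex.normSq_pos.mpr hb0
          refine ⟨(starRingEnd ℂ b)⁻¹, ⟨?_, ?_, ?_, ?_, ?_⟩, hi _ (hc b hbs)⟩
          · rw [norm_inv, Complex.norm_conj]
            exact le_of_lt ((inv_lt_one₀ (by linarith)).mpr hble)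
          · exact inv_ne_zero (by simpa using hb0)
          · rw [im_inv_conj hb0]
            positivity
          · intro h
            have : ((starRingEnd ℂ b)⁻¹).im = 0 := by rw [h]; simp
            rw [im_inv_conj hb0] at this
            have := div_eq_zero_iff.mp this
            rcases this with h' | h'
            · linarith
            · linarith
          · intro h
            have : ((starRingEnd ℂ b)⁻¹).im = 0 := by rw [h]; simp
            rw [im_inv_conj hb0] at this
            have := div_eq_zero_iff.mp this
            rcases this with h' | h'
            · linarith
            · linarith
    obtain ⟨ξ, hξD, hξs⟩ := hnorm
    have horbmem : ∀ z ∈ orb ξ, z ∈ s := by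
      intro z hz
      rcases orb_cases hz with h | h | h | h <;> subst h
      · exact hξs
      · exact hc _ hξs
      · exact hi _ hξs
      · exact hi _ (hc _ hξs)
    have horb : orb ξ ≤ s := by
      rw [Multiset.le_iff_count]
      intro z
      by_cases hz : z ∈ orb ξ
      · have h1' : (orb ξ).count z = 1 :=
          Multiset.count_eq_one_of_mem (orb_nodup hξD) hz
        rw [h1']
        exact Multiset.one_le_count_iff_mem.mpr (horbmem z hz)
      · simp [Multiset.count_eq_zero.mpr hz]
    set s' := s - orb ξ with hs'
    have hcard' : Multiset.card s' ≤ N := by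
      rw [hs', Multiset.card_sub horb]
      have : 0 < Multiset.card (orb ξ) :=
        Multiset.card_pos_iff_exists_mem.mpr ⟨ξ, mem_orb_self ξ⟩
      omega
    have hconj' : s'.map (starRingEnd ℂ) = s' :=
      map_sub_invol (Complex.conj_conj) hconj (orb_map_conj hξD)
    have hinv' : s'.map (·⁻¹) = s' :=
      map_sub_invol inv_involutive hinv (orb_map_inv hξD)
    have hle' : s' ≤ s := tsub_le_self
    obtain ⟨f', hf'D, hf'⟩ := ih s' hcard' hconj' hinv'
      (fun h => h0 (Multiset.mem_of_le hle' h))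
      (fun h => h1 (Multiset.mem_of_le hle' h))
      (fun h => hm1 (Multiset.mem_of_le hle' h))
    refine ⟨Finsupp.single ξ 1 + f', ?_, ?_⟩
    · intro ξ'' h
      rcases Finset.mem_union.mp (Finsupp.support_add h) with h' | h'
      · have : ξ'' = ξ := by
          have := Finsupp.support_single_subset h'
          simpa using this
        exact this ▸ hξD
      · exact hf'D ξ'' h'
    · rw [prodOrb_add_single, hf', one_nsmul, hs']
      rw [add_comm]
      exact tsub_add_cancel_of_le horb
lemma prod_toLaurent_T (s : Finset ℂ) (g : ℂ → Polynomial ℂ) (e : ℂ → ℤ) :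
    (∏ ξ ∈ s, (Polynomial.toLaurent (g ξ) * T (e ξ)))
      = Polynomial.toLaurent (∏ ξ ∈ s, g ξ) * T (∑ ξ ∈ s, e ξ) := by
  induction s using Finset.induction with
  | empty => simp
  | insert a s h ih =>
    rw [Finset.prod_insert h, ih, Finset.prod_insert h, Finset.sum_insert h, map_mul, T_add]
    ring

lemma prod_Bxi_eq (f : ℂ →₀ ℕ) :
    f.prod (fun ξ k => Bxi ξ ^ k)
      = Polynomial.toLaurent (f.prod fun ξ k => orbPoly ξ ^ k)
        * T (-(f.sum fun ξ k => ((k : ℤ) * sdeg ξ))) := by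
  unfold Finsupp.prod Finsupp.sum
  have step : ∀ ξ ∈ f.support, Bxi ξ ^ f ξ
      = Polynomial.toLaurent (orbPoly ξ ^ f ξ) * T (-((f ξ : ℤ) * sdeg ξ)) := by
    intro ξ _
    rw [Bxi_eq, mul_pow, ← map_pow, T_pow]
    congr 1
    push_cast
    ring
  rw [Finset.prod_congr rfl step, prod_toLaurent_T]
  congr 1
  rw [← Finset.sum_neg_distrib]

lemma reverse_X_sub_C (z : ℂ) :
    (Polynomial.X - Polynomial.C z).reverse = 1 - Polynomial.C z * Polynomial.X := by
  rw [Polynomial.reverse, Polynomial.natDegree_X_sub_C, sub_eq_add_neg, Polynomial.reflect_add,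
    Polynomial.reflect_neg]
  have h1 : Polynomial.reflect 1 (Polynomial.X : Polynomial ℂ) = 1 := by
    have := Polynomial.reflect_monomial 1 1 (R := ℂ)
    simpa using this
  have h2 : Polynomial.reflect 1 (Polynomial.C z) = Polynomial.C z * Polynomial.X := by
    have : (Polynomial.C z : Polynomial ℂ) = Polynomial.C z * Polynomial.X ^ 0 := by simp
    rw [this, Polynomial.reflect_C_mul, Polynomial.reflect_monomial]
    simp
  rw [h1, h2, sub_eq_add_neg]

lemma reverse_multiset_prod (s : Multiset ℂ) :
    ((s.map fun z => Polynomial.X - Polynomial.C z).prod).reverse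
      = (s.map fun z => 1 - Polynomial.C z * Polynomial.X).prod := by
  induction s using Multiset.induction with
  | empty =>
    simp only [Multiset.map_zero, Multiset.prod_zero]
    simpa using Polynomial.reverse_C (1 : ℂ)
  | cons a s ih =>
    rw [Multiset.map_cons, Multiset.map_cons, Multiset.prod_cons, Multiset.prod_cons,
      Polynomial.reverse_mul_of_domain, reverse_X_sub_C, ih]

lemma roots_inv_of_reverse {Q : Polynomial ℂ} (hQ : Q ≠ 0) (h0 : Q.coeff 0 ≠ 0)
    (hrev : Q.reverse = Q) : Q.roots.map (·⁻¹) = Q.roots := by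
  have hcard : Multiset.card Q.roots = Q.natDegree :=
    Polynomial.splits_iff_card_roots.mp (IsAlgClosed.splits Q)
  have hroots0 : ∀ z ∈ Q.roots, z ≠ 0 := by
    intro z hz h
    rw [Polynomial.mem_roots hQ] at hz
    rw [h, Polynomial.IsRoot, ← Polynomial.coeff_zero_eq_eval_zero] at hz
    exact h0 hz
  have hfact := (Polynomial.C_leadingCoeff_mul_prod_multiset_X_sub_C hcard).symm
  have hrev2 : Q.reverse = Polynomial.C Q.leadingCoeff *
      (Q.roots.map fun z => 1 - Polynomial.C z * Polynomial.X).prod := by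
    conv_lhs => rw [hfact]
    rw [Polynomial.reverse_mul_of_domain, Polynomial.reverse_C, reverse_multiset_prod]
  have key : (Q.roots.map fun z => 1 - Polynomial.C z * Polynomial.X).prod
      = Polynomial.C ((Q.roots.map fun z => -z).prod) *
        ((Q.roots.map (·⁻¹)).map fun z => Polynomial.X - Polynomial.C z).prod := by
    rw [Multiset.map_map]
    have congr1 : (Q.roots.map fun z => 1 - Polynomial.C z * Polynomial.X)
        = Q.roots.map fun z => Polynomial.C (-z) *
            (Polynomial.X - Polynomial.C z⁻¹) := by
      apply Multiset.map_congr rfl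
      intro z hz
      have hz0 := hroots0 z hz
      have : Polynomial.C (-z) * (Polynomial.X - Polynomial.C z⁻¹)
          = 1 - Polynomial.C z * Polynomial.X := by
        rw [mul_sub, ← Polynomial.C_mul, neg_mul, mul_inv_cancel₀ hz0]
        simp [Polynomial.C_neg]
        ring
      exact this.symm
    rw [congr1, Multiset.prod_map_mul]
    congr 1
    · rw [← Multiset.prod_hom _ (Polynomial.C : ℂ →+* Polynomial ℂ), Multiset.map_map]
      rfl
  have hprodne : (Q.roots.map fun z => -z).prod ≠ 0 := by
    intro h
    rw [Multiset.prod_eq_zero_iff] at h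
    obtain ⟨z, hz, hz0⟩ := Multiset.mem_map.mp h
    exact hroots0 z hz (neg_eq_zero.mp hz0)
  have : Q.roots = Q.roots.map (·⁻¹) := by
    conv_lhs => rw [← hrev, hrev2, key]
    rw [← mul_assoc, ← Polynomial.C_mul]
    rw [Polynomial.roots_C_mul _ (mul_ne_zero (Polynomial.leadingCoeff_ne_zero.mpr hQ) hprodne),
      Polynomial.roots_multiset_prod_X_sub_C]
  exact this.symm
lemma strip_X : ∀ (n : ℕ) (f : Polynomial ℝ), f ≠ 0 → f.natDegree ≤ n →
    ∃ (k : ℕ) (g : Polynomial ℝ), g.coeff 0 ≠ 0 ∧ f = g * Polynomial.X ^ k := by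
  intro n
  induction n with
  | zero =>
    intro f hf hdeg
    by_cases h0 : f.coeff 0 ≠ 0
    · exact ⟨0, f, h0, by simp⟩
    · push_neg at h0
      exfalso
      apply hf
      have : f = Polynomial.C (f.coeff 0) := Polynomial.eq_C_of_natDegree_eq_zero (by omega)
      rw [this, h0, Polynomial.C_0]
  | succ n ih =>
    intro f hf hdeg
    by_cases h0 : f.coeff 0 ≠ 0
    · exact ⟨0, f, h0, by simp⟩
    · push_neg at h0
      obtain ⟨g, hg⟩ := Polynomial.X_dvd_iff.mpr h0
      have hgne : g ≠ 0 := by rintro rfl; rw [mul_zero] at hg; exact hf hg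
      have hdeg' : g.natDegree ≤ n := by
        have : f.natDegree = g.natDegree + 1 := by
          rw [hg, Polynomial.natDegree_X_mul hgne]
        omega
      obtain ⟨k, g', hg', hgg⟩ := ih g hgne hdeg'
      exact ⟨k + 1, g', hg', by rw [hg, hgg]; ring⟩

lemma mem_prodOrb_ne_zero {f : ℂ →₀ ℕ} (hD : ∀ ξ ∈ f.support, Dset ξ) {z : ℂ}
    (hz : z ∈ prodOrb f) : z ≠ 0 := by
  induction f using Finsupp.induction with
  | zero => simp [prodOrb] at hz
  | single_add a n g hag hn ih =>
    have haD : Dset a := hD a (by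
      rw [Finsupp.mem_support_iff, Finsupp.add_apply, Finsupp.single_apply]
      simp [hn])
    have hgD : ∀ ξ' ∈ g.support, Dset ξ' := by
      intro ξ' hξ'
      apply hD
      rw [Finsupp.mem_support_iff] at hξ' ⊢
      rw [Finsupp.add_apply, Finsupp.single_apply]
      have hne : ξ' ≠ a := fun h => hag (Finsupp.mem_support_iff.mpr (h ▸ hξ'))
      simp [Ne.symm hne, hξ']
    rw [prodOrb_add_single, Multiset.mem_add] at hz
    rcases hz with hz | hz
    · rw [Multiset.mem_nsmul] at hz
      exact orb_ne_zero haD.2.1 hz.2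
    · exact ih hgD hz

/-- Every nonzero real palindromic Laurent polynomial, nonvanishing at `t = ±1`,
factors uniquely as a nonzero real constant times a power `±tⁿ` (the constant
carrying the sign) times a product of elementary palindromic polynomials
`B_ξ^{n_ξ}`, with `ξ` ranging over `{ξ ≠ 0 : Im ξ ≥ 0, |ξ| ≤ 1, ξ ≠ ±1}`. -/
theorem palindromic_factorization_unique
    (p : LaurentPolynomial ℝ) (hp : p ≠ 0) (hpal : invert p = p)
    (h1 : lEval p 1 ≠ 0) (hm1 : lEval p (-1) ≠ 0) :
    ∃! x : ℝ × ℤ × (ℂ →₀ ℕ),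
      x.1 ≠ 0 ∧
      (∀ ξ ∈ x.2.2.support,
        ‖ξ‖ ≤ 1 ∧ ξ ≠ 0 ∧ 0 ≤ ξ.im ∧ ξ ≠ 1 ∧ ξ ≠ -1) ∧
      lmap p = C (x.1 : ℂ) * T x.2.1 * x.2.2.prod (fun ξ k => Bxi ξ ^ k) := by
  classical
  -- Step 1
  obtain ⟨n₀, P', hP'⟩ := LaurentPolynomial.exists_T_pow p
  have hP'ne : P' ≠ 0 := by
    rintro rfl
    rw [_root_.map_zero] at hP'
    have h2 := congrArg (· * T (-(n₀ : ℤ))) hP'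
    simp only [zero_mul, mul_T_assoc, add_neg_cancel, T_zero, mul_one] at h2
    exact hp h2.symm
  obtain ⟨k, Pr, hPr0, hPrP'⟩ := strip_X P'.natDegree P' hP'ne le_rfl
  have hPrne : Pr ≠ 0 := fun h => hPr0 (by rw [h]; simp)
  set m : ℤ := (k : ℤ) - n₀ with hm_def
  have hpm : p = Polynomial.toLaurent Pr * T m := by
    have h2 : p = Polynomial.toLaurent P' * T (-(n₀ : ℤ)) := by
      rw [hP', mul_T_assoc]
      simp
    rw [h2, hPrP', map_mul, Polynomial.toLaurent_X_pow, mul_T_assoc, hm_def, sub_eq_add_neg]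
  -- Step 2
  have hrevPr : Pr.reverse = Pr := by
    have hinv0 : invert (Polynomial.toLaurent Pr)
        = Polynomial.toLaurent Pr.reverse * T (-(Pr.natDegree : ℤ)) := by
      rw [LaurentPolynomial.toLaurent_reverse, mul_T_assoc]
      simp
    have hinvp : Polynomial.toLaurent Pr * T m
        = Polynomial.toLaurent Pr.reverse * T (-(Pr.natDegree : ℤ) + -m) := by
      conv_lhs => rw [← hpm, ← hpal, hpm]
      rw [map_mul, LaurentPolynomial.invert_T, hinv0, mul_T_assoc]
    have := toLaurent_T_eq hPr0
      (by rw [Polynomial.coeff_zero_reverse]; exact Polynomial.leadingCoeff_ne_zero.mpr hPrne)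
      hinvp
    exact this.1.symm
  -- Step 3
  set Q : Polynomial ℂ := Pr.map (algebraMap ℝ ℂ) with hQdef
  have hQne : Q ≠ 0 := Polynomial.map_ne_zero hPrne
  have hQc0 : Q.coeff 0 ≠ 0 := by
    rw [hQdef, Polynomial.coeff_map]
    simpa using hPr0
  have hQdeg : Q.natDegree = Pr.natDegree := Polynomial.natDegree_map (algebraMap ℝ ℂ)
  have hQrev : Q.reverse = Q := by
    ext n
    rw [Polynomial.coeff_reverse, hQdef, Polynomial.coeff_map, Polynomial.coeff_map]
    congr 1
    have h3 : Pr.coeff (Polynomial.revAt Q.natDegree n) = Pr.reverse.coeff n := by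
      rw [Polynomial.coeff_reverse, hQdeg]
    rw [h3, hrevPr]
  have hlc : Q.leadingCoeff = (Pr.leadingCoeff : ℂ) := by
    rw [hQdef, Polynomial.leadingCoeff_map]
    rfl
  have hev1 : Q.eval 1 ≠ 0 := by
    rw [hpm, lEval_toLaurent_T Pr m (z := 1) one_ne_zero] at h1
    intro h
    rw [← hQdef] at h1
    rw [h, zero_mul] at h1
    exact h1 rfl
  have hevm1 : Q.eval (-1) ≠ 0 := by
    rw [hpm, lEval_toLaurent_T Pr m (z := -1) (by norm_num)] at hm1
    intro h
    rw [← hQdef] at hm1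
    rw [h, zero_mul] at hm1
    exact hm1 rfl
  have hR0 : (0:ℂ) ∉ Q.roots := by
    intro h
    rw [Polynomial.mem_roots hQne] at h
    rw [Polynomial.IsRoot, ← Polynomial.coeff_zero_eq_eval_zero] at h
    exact hQc0 h
  have hR1 : (1:ℂ) ∉ Q.roots := by
    intro h
    exact hev1 ((Polynomial.mem_roots hQne).mp h)
  have hRm1 : (-1:ℂ) ∉ Q.roots := by
    intro h
    exact hevm1 ((Polynomial.mem_roots hQne).mp h)
  have hRconj : Q.roots.map (starRingEnd ℂ) = Q.roots := by
    have hmapQ : Q.map (starRingEnd ℂ) = Q := by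
      rw [hQdef, Polynomial.map_map]
      congr 1
      exact RingHom.ext fun a => by simp [Complex.conj_ofReal]
    conv_rhs => rw [← hmapQ]
    exact (Polynomial.Splits.roots_map_of_injective (IsAlgClosed.splits Q) (starRingEnd ℂ).injective).symm
  have hRinv : Q.roots.map (·⁻¹) = Q.roots := roots_inv_of_reverse hQne hQc0 hQrev
  have hcard : Multiset.card Q.roots = Q.natDegree :=
    Polynomial.splits_iff_card_roots.mp (IsAlgClosed.splits Q)
  have hQfact : Q = Polynomial.C Q.leadingCoeff *
      ((Q.roots.map fun z => Polynomial.X - Polynomial.C z).prod) :=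
    (Polynomial.C_leadingCoeff_mul_prod_multiset_X_sub_C hcard).symm
  -- Step 4
  obtain ⟨f₀, hf₀D, hf₀⟩ := decomp (Multiset.card Q.roots) Q.roots le_rfl hRconj hRinv hR0 hR1 hRm1
  -- key computation
  have key : ∀ (r : ℝ) (n : ℤ) (f : ℂ →₀ ℕ),
      LaurentPolynomial.C (r:ℂ) * T n * f.prod (fun ξ k => Bxi ξ ^ k)
        = Polynomial.toLaurent (Polynomial.C (r:ℂ)
            * ((prodOrb f).map (fun z => Polynomial.X - Polynomial.C z)).prod)
          * T (n - (f.sum fun ξ k => ((k:ℤ) * sdeg ξ))) := by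
    intro r n f
    rw [prod_Bxi_eq, ← prod_X_sub_C_prodOrb, map_mul, Polynomial.toLaurent_C, sub_eq_add_neg,
      T_add]
    ring
  -- the "main" extraction
  have main : ∀ (r : ℝ) (n : ℤ) (f : ℂ →₀ ℕ), r ≠ 0 → (∀ ξ ∈ f.support, Dset ξ) →
      lmap p = LaurentPolynomial.C (r:ℂ) * T n * f.prod (fun ξ k => Bxi ξ ^ k) →
      Q = Polynomial.C (r:ℂ)
          * ((prodOrb f).map (fun z => Polynomial.X - Polynomial.C z)).prod
        ∧ m = n - (f.sum fun ξ k => ((k:ℤ) * sdeg ξ)) := by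
    intro r n f hr hD heq
    rw [hpm, lmap_toLaurent_T, key, ← hQdef] at heq
    refine toLaurent_T_eq hQc0 ?_ heq
    rw [Polynomial.coeff_zero_eq_eval_zero, Polynomial.eval_mul, Polynomial.eval_C,
      Polynomial.eval_multiset_prod]
    apply mul_ne_zero (Complex.ofReal_ne_zero.mpr hr)
    intro h
    rw [Multiset.prod_eq_zero_iff, Multiset.mem_map] at h
    obtain ⟨q, hq, hq0⟩ := h
    rw [Multiset.mem_map] at hq
    obtain ⟨z, hz, rfl⟩ := hq
    simp only [Polynomial.eval_sub, Polynomial.eval_X, Polynomial.eval_C, zero_sub,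
      neg_eq_zero] at hq0
    exact mem_prodOrb_ne_zero hD hz hq0
  -- the canonical witness
  refine ⟨(Pr.leadingCoeff, m + (f₀.sum fun ξ k => ((k:ℤ) * sdeg ξ)), f₀), ⟨?_, ?_, ?_⟩, ?_⟩
  · exact Polynomial.leadingCoeff_ne_zero.mpr hPrne
  · exact hf₀D
  · show lmap p = _
    rw [hpm, lmap_toLaurent_T, key, ← hQdef, hf₀, ← hlc, ← hQfact]
    congr 1
    congr 1
    ring
  · rintro ⟨r, n, f⟩ ⟨hr, hDf, heq⟩
    obtain ⟨hQeq, hmeq⟩ := main r n f hr hDf heq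
    have hroots : prodOrb f = Q.roots := by
      rw [hQeq, Polynomial.roots_C_mul _ (Complex.ofReal_ne_zero.mpr hr),
        Polynomial.roots_multiset_prod_X_sub_C]
    have hfeq : f = f₀ := by
      ext ξ
      by_cases hξ : Dset ξ
      · rw [← count_prodOrb hDf hξ, ← count_prodOrb hf₀D hξ, hroots, hf₀]
      · have h1' : f ξ = 0 := by
          by_contra h
          exact hξ (hDf ξ (Finsupp.mem_support_iff.mpr h))
        have h2' : f₀ ξ = 0 := by
          by_contra h
          exact hξ (hf₀D ξ (Finsupp.mem_support_iff.mpr h))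
        rw [h1', h2']
    have hM : ((prodOrb f).map (fun z => Polynomial.X - Polynomial.C z)).prod ≠ 0 := by
      apply Polynomial.Monic.ne_zero
      apply Polynomial.monic_multiset_prod_of_monic
      intro z _
      exact Polynomial.monic_X_sub_C z
    have hreq : r = Pr.leadingCoeff := by
      have h4 : Polynomial.C (r:ℂ)
            * ((prodOrb f).map (fun z => Polynomial.X - Polynomial.C z)).prod
          = Polynomial.C (Pr.leadingCoeff:ℂ)
            * ((prodOrb f).map (fun z => Polynomial.X - Polynomial.C z)).prod := by
        rw [← hQeq]
        conv_lhs => rw [hQfact, hlc, ← hroots]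
      have h5 := mul_right_cancel₀ hM h4
      have h6 := Polynomial.C_injective h5
      exact_mod_cast h6
    have hneq : n = m + (f₀.sum fun ξ' k => ((k:ℤ) * sdeg ξ')) := by
      rw [← hfeq]
      omega
    rw [Prod.ext_iff, Prod.ext_iff]
    exact ⟨hreq, hneq, hfeq⟩
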